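/- There exists a Lebesgue-measurable function f : ℝ → ℝ such that the Banach indicatrix y ↦ N(y, f, ℝ) is not measurable with respect to the completion of Lebesgue measure on ℝ (in particular, it is not almost everywhere equal to any Borel-measurable function). Such an f can be obtained by choosing a bijection from the Cantor set C onto a Vitali non-measurable set V ⊆ ℝ and extending it by 0 off C; then N(y, f, ℝ) coincides with the characteristic function of V on ℝ \ {0}. -/

import Mathlib

open MeasureTheory

/-- A metric space is geometrically doubling if there is `n : ℕ` such that every ball
`B(x, r)` can be covered by at most `n` balls of radius `r / 2`. -/
def GeometricallyDoubling (X : Type*) [PseudoMetricSpace X] : Prop :=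
  ∃ n : ℕ, ∀ (x : X) (r : ℝ), ∃ s : Finset X,
    s.card ≤ n ∧ Metric.ball x r ⊆ ⋃ c ∈ s, Metric.ball c (r / 2)

/-- A mapping `f : X → Y` is `μ`-measurable if the preimage of every open set is
measurable for the completion of `μ` (i.e. null measurable). -/
def MuMeasurableMap {X Y : Type*} [MeasurableSpace X] [TopologicalSpace Y]
    (μ : Measure X) (f : X → Y) : Prop :=
  ∀ E : Set Y, IsOpen E → NullMeasurableSet (f ⁻¹' E) μ

/-- The Banach indicatrix (multiplicity function): the extended-natural-number
cardinality of `{x ∈ A | f x = y}`. -/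
noncomputable def banachIndicatrix {X Y : Type*} (f : X → Y) (A : Set X) (y : Y) : ℕ∞ :=
  (A ∩ f ⁻¹' {y}).encard

section AuxVitali
open Cardinal

lemma cantor_mem_Icc (f : ℕ → Bool) (k : ℕ) :
    cantorFunction (1/3) f ∈ Set.Icc
      (∑ i ∈ Finset.range k, cantorFunctionAux (1/3) f i)
      ((∑ i ∈ Finset.range k, cantorFunctionAux (1/3) f i) + (1/3)^k * (3/2)) := by
  have hc0 : (0:ℝ) ≤ 1/3 := by norm_num
  have hc1 : (1/3 : ℝ) < 1 := by norm_num
  have hsum := Cardinal.summable_cantor_function f hc0 hc1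
  have hsplit := Summable.sum_add_tsum_nat_add (f := cantorFunctionAux (1/3) f) k hsum
  have htail_nonneg : 0 ≤ ∑' i : ℕ, cantorFunctionAux (1/3) f (i + k) :=
    tsum_nonneg fun n => Cardinal.cantorFunctionAux_nonneg hc0
  have hgeom : Summable (fun i : ℕ => ((1:ℝ)/3)^(i+k)) := by
    simpa [pow_add, mul_comm] using (summable_geometric_of_lt_one hc0 hc1).mul_right (((1:ℝ)/3)^k)
  have h1 : ∑' i : ℕ, cantorFunctionAux (1/3) f (i + k) ≤ ∑' i : ℕ, ((1:ℝ)/3)^(i+k) := by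
    apply Summable.tsum_le_tsum _ ((summable_nat_add_iff (f := cantorFunctionAux (1/3) f) k).mpr hsum) hgeom
    intro n
    cases h : f (n + k)
    · simp only [Cardinal.cantorFunctionAux_false h]
      positivity
    · simp [Cardinal.cantorFunctionAux_true h]
  have h2 : ∑' i : ℕ, ((1:ℝ)/3)^(i+k) = (1/3)^k * (3/2) := by
    simp_rw [pow_add, mul_comm]
    rw [tsum_mul_left, tsum_geometric_of_lt_one hc0 hc1]
    norm_num
    ring
  constructor
  · rw [cantorFunction, ← hsplit]; linarith
  · rw [cantorFunction, ← hsplit]; linarith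

lemma volume_range_cantor : volume (Set.range (cantorFunction (1/3))) = 0 := by
  have key : ∀ k : ℕ, volume (Set.range (cantorFunction (1/3)))
      ≤ ENNReal.ofReal ((2/3)^k * (3/2)) := by
    intro k
    set T : (Fin k → Bool) → ℝ := fun w => ∑ i : Fin k, (if w i then ((1:ℝ)/3)^(i:ℕ) else 0) with hT
    have hsub : Set.range (cantorFunction (1/3)) ⊆
        ⋃ w ∈ (Finset.univ : Finset (Fin k → Bool)),
          Set.Icc (T w) (T w + (1/3)^k * (3/2)) := by
      rintro _ ⟨f, rfl⟩
      refine Set.mem_biUnion (Finset.mem_univ (fun i : Fin k => f i)) ?_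
      have hTf : T (fun i : Fin k => f i) = ∑ i ∈ Finset.range k, cantorFunctionAux (1/3) f i := by
        rw [hT, ← Fin.sum_univ_eq_sum_range (fun i => cantorFunctionAux (1/3) f i) k]
        refine Finset.sum_congr rfl fun i _ => ?_
        cases h : f i <;> simp [cantorFunctionAux, h]
      rw [hTf]
      exact cantor_mem_Icc f k
    calc volume (Set.range (cantorFunction (1/3)))
        ≤ volume (⋃ w ∈ (Finset.univ : Finset (Fin k → Bool)),
            Set.Icc (T w) (T w + (1/3)^k * (3/2))) := measure_mono hsub
      _ ≤ ∑ w ∈ (Finset.univ : Finset (Fin k → Bool)),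
            volume (Set.Icc (T w) (T w + (1/3)^k * (3/2))) := measure_biUnion_finset_le _ _
      _ = ∑ w ∈ (Finset.univ : Finset (Fin k → Bool)),
            ENNReal.ofReal ((1/3)^k * (3/2)) := by
          refine Finset.sum_congr rfl fun w _ => ?_
          rw [Real.volume_Icc]; ring_nf
      _ = (2^k : ℕ) * ENNReal.ofReal ((1/3)^k * (3/2)) := by
          rw [Finset.sum_const, Finset.card_univ]
          simp [nsmul_eq_mul]
      _ = ENNReal.ofReal ((2/3)^k * (3/2)) := by
          rw [← ENNReal.ofReal_natCast, ← ENNReal.ofReal_mul (by positivity)]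
          congr 1
          push_cast
          rw [div_pow, div_pow]
          ring
  have hlim : Filter.Tendsto (fun k : ℕ => ENNReal.ofReal ((2/3)^k * (3/2)))
      Filter.atTop (nhds 0) := by
    have : Filter.Tendsto (fun k : ℕ => ((2:ℝ)/3)^k * (3/2)) Filter.atTop (nhds 0) := by
      simpa using (tendsto_pow_atTop_nhds_zero_of_lt_one (by norm_num : (0:ℝ) ≤ 2/3)
        (by norm_num)).mul_const ((3:ℝ)/2)
    have h' := (ENNReal.continuous_ofReal.tendsto 0).comp this
    rw [ENNReal.ofReal_zero] at h'
    exact h'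
  exact le_antisymm (ge_of_tendsto' hlim key) zero_le

/-- rational-difference setoid on ℝ -/
def ratSetoid : Setoid ℝ :=
  ⟨fun x y => ∃ q : ℚ, x - y = (q:ℝ), by
    constructor
    · exact fun x => ⟨0, by simp⟩
    · rintro x y ⟨q, hq⟩; exact ⟨-q, by push_cast; linarith⟩
    · rintro x y z ⟨q, hq⟩ ⟨r, hr⟩; exact ⟨q + r, by push_cast; linarith⟩⟩

noncomputable def vitaliRep (x : ℝ) : ℝ :=
  Int.fract (Quotient.out (Quotient.mk ratSetoid x))

lemma vitaliRep_rel (x : ℝ) : ∃ q : ℚ, x - vitaliRep x = (q:ℝ) := by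
  have h1 : ratSetoid.r (Quotient.out (Quotient.mk ratSetoid x)) x :=
    Quotient.exact (Quotient.out_eq _)
  obtain ⟨q, hq⟩ := h1
  refine ⟨-q + ⌊Quotient.out (Quotient.mk ratSetoid x)⌋, ?_⟩
  rw [vitaliRep, Int.fract]
  push_cast
  linarith

lemma vitaliRep_eq_of_rel {x y : ℝ} (h : ∃ q : ℚ, x - y = (q:ℝ)) :
    vitaliRep x = vitaliRep y := by
  rw [vitaliRep, vitaliRep, Quotient.sound (a := x) (b := y) h]

lemma vitaliRep_mem (x : ℝ) : vitaliRep x ∈ Set.Ico (0:ℝ) 1 :=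
  ⟨Int.fract_nonneg _, Int.fract_lt_one _⟩

lemma exists_not_nullMeasurableSet : ∃ V : Set ℝ, ¬ NullMeasurableSet V volume := by
  refine ⟨Set.range vitaliRep, fun hV => ?_⟩
  set V := Set.range vitaliRep with hVdef
  -- translated sets
  set A : (Set.Icc (-1:ℚ) 1) → Set ℝ := fun q => (fun x => x - (q:ℝ)) ⁻¹' V with hA
  have hAnm : ∀ q, NullMeasurableSet (A q) volume := fun q =>
    hV.preimage (measurePreserving_sub_right volume _).quasiMeasurePreserving
  have hAvol : ∀ q, volume (A q) = volume V := fun q =>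
    (measurePreserving_sub_right volume _).measure_preimage hV
  have hdisj : Pairwise (Function.onFun (AEDisjoint volume) A) := by
    intro q r hqr
    refine Disjoint.aedisjoint (Set.disjoint_left.mpr ?_)
    rintro x ⟨a, ha⟩ ⟨b, hb⟩
    obtain ⟨qa, hqa⟩ := vitaliRep_rel a
    obtain ⟨qb, hqb⟩ := vitaliRep_rel b
    have ha' : vitaliRep a = x - ((q:ℚ):ℝ) := ha
    have hb' : vitaliRep b = x - ((r:ℚ):ℝ) := hb
    have h1 : vitaliRep a = vitaliRep b := by
      apply vitaliRep_eq_of_rel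
      refine ⟨qa - qb + ((r:ℚ) - (q:ℚ)), ?_⟩
      push_cast
      linarith
    have h2 : ((q:ℚ):ℝ) = ((r:ℚ):ℝ) := by rw [h1] at ha'; linarith [hb', ha']
    exact hqr (Subtype.ext (by exact_mod_cast h2))
  have hUnion : volume (⋃ q, A q) = ∑' q : (Set.Icc (-1:ℚ) 1), volume V := by
    rw [measure_iUnion₀ hdisj hAnm]; simp [hAvol]
  have hcover : Set.Icc (0:ℝ) 1 ⊆ ⋃ q, A q := by
    intro x hx
    obtain ⟨q, hq⟩ := vitaliRep_rel x
    have hrep := vitaliRep_mem x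
    have hq1 : (-1:ℚ) ≤ q := by
      have : (-1:ℝ) ≤ (q:ℝ) := by linarith [hrep.2, hx.1, hq]
      exact_mod_cast this
    have hq2 : q ≤ 1 := by
      have : (q:ℝ) ≤ 1 := by linarith [hrep.1, hx.2, hq]
      exact_mod_cast this
    refine Set.mem_iUnion.mpr ⟨⟨q, hq1, hq2⟩, ?_⟩
    show x - (q:ℝ) ∈ V
    rw [show x - (q:ℝ) = vitaliRep x by linarith]
    exact ⟨x, rfl⟩
  have hsub : (⋃ q, A q) ⊆ Set.Icc (-1:ℝ) 2 := by
    rintro x hx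
    obtain ⟨q, hq⟩ := Set.mem_iUnion.mp hx
    obtain ⟨a, ha⟩ := hq
    have hrep := vitaliRep_mem a
    have hq1 : (-1:ℝ) ≤ (q:ℝ) := by exact_mod_cast q.2.1
    have hq2 : ((q:ℚ):ℝ) ≤ 1 := by exact_mod_cast q.2.2
    have : x - (q:ℝ) = vitaliRep a := ha.symm
    constructor <;> [linarith [hrep.1]; linarith [hrep.2.le]]
  -- now measure contradiction
  have hone : (1:ENNReal) ≤ volume (⋃ q, A q) := by
    calc (1:ENNReal) = volume (Set.Icc (0:ℝ) 1) := by simp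
      _ ≤ _ := measure_mono hcover
  have hthree : volume (⋃ q, A q) ≤ 3 := by
    calc volume (⋃ q, A q) ≤ volume (Set.Icc (-1:ℝ) 2) := measure_mono hsub
      _ = 3 := by simp [Real.volume_Icc]; norm_num
  rcases eq_or_ne (volume V) 0 with h0 | h0
  · rw [hUnion, h0] at hone; simp at hone
  · have : Infinite (Set.Icc (-1:ℚ) 1) := Set.Icc.infinite (by norm_num)
    rw [hUnion, ENNReal.tsum_const_eq_top_of_ne_zero h0] at hthree
    simp at hthree

end AuxVitali

/-- There is a Lebesgue-measurable function `f : ℝ → ℝ` whose Banach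
indicatrix `y ↦ N(y, f, ℝ)` is not measurable with respect to the completion of Lebesgue
measure; in particular it is not almost everywhere equal to any Borel-measurable
function. -/
theorem exists_measurable_fun_banachIndicatrix_not_nullMeasurable :
    ∃ f : ℝ → ℝ,
      (∀ E : Set ℝ, IsOpen E → NullMeasurableSet (f ⁻¹' E) volume) ∧
      ¬ NullMeasurable (fun y => banachIndicatrix f Set.univ y) volume ∧
      ∀ g : ℝ → ℕ∞, Measurable g →
        ¬ (fun y => banachIndicatrix f Set.univ y) =ᵐ[volume] g := by
  classical
  obtain ⟨V, hV⟩ := exists_not_nullMeasurableSet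
  -- an injection from ℝ into a null set
  have hemb : Nonempty (ℝ ↪ (ℕ → Bool)) := by
    rw [← Cardinal.le_def, Cardinal.mk_real]
    have : Cardinal.mk (ℕ → Bool) = 2 ^ (Cardinal.aleph0 : Cardinal) := by
      rw [Cardinal.mk_arrow]; simp
    rw [this, Cardinal.continuum]
  obtain ⟨e⟩ := hemb
  set h : ℝ → ℝ := Cardinal.cantorFunction (1/3) ∘ e with hh
  have hinj : Function.Injective h :=
    (Cardinal.cantorFunction_injective (by norm_num) (by norm_num)).comp e.injective
  set W : Set ℝ := h '' V with hW
  have hWnull : volume W = 0 := by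
    apply measure_mono_null _ volume_range_cantor
    rintro _ ⟨x, _, rfl⟩; exact ⟨e x, rfl⟩
  set f : ℝ → ℝ := fun x => if x ∈ W then Function.invFun h x else 0 with hf
  have hleft : Function.LeftInverse (Function.invFun h) h := Function.leftInverse_invFun hinj
  have hfh : ∀ y ∈ V, f (h y) = y := by
    intro y hy
    have hyW : h y ∈ W := Set.mem_image_of_mem h hy
    rw [hf]
    simp only [hyW, if_true]
    exact hleft y
  have hfW : ∀ x ∈ W, f x ∈ V := by
    rintro x ⟨y, hy, rfl⟩
    rw [hfh y hy]; exact hy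
  have hf0 : ∀ x, x ∉ W → f x = 0 := by intro x hx; rw [hf]; simp [hx]
  -- f is Lebesgue measurable
  have hmeas : ∀ E : Set ℝ, IsOpen E → NullMeasurableSet (f ⁻¹' E) volume := by
    intro E _
    by_cases h0 : (0:ℝ) ∈ E
    · have : (f ⁻¹' E)ᶜ ⊆ W := by
        intro x hx
        by_contra hxW
        exact hx (by rw [Set.mem_preimage, hf0 x hxW]; exact h0)
      have := NullMeasurableSet.of_null (measure_mono_null this hWnull)
      simpa using this.compl
    · have : f ⁻¹' E ⊆ W := by
        intro x hx
        by_contra hxW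
        rw [Set.mem_preimage, hf0 x hxW] at hx
        exact h0 hx
      exact NullMeasurableSet.of_null (measure_mono_null this hWnull)
  -- the fibers of f
  have hfiber_mem : ∀ y ∈ V, y ≠ 0 → f ⁻¹' {y} = {h y} := by
    intro y hy hy0
    ext x
    simp only [Set.mem_preimage, Set.mem_singleton_iff]
    constructor
    · intro hx
      by_cases hxW : x ∈ W
      · obtain ⟨z, hz, rfl⟩ := hxW
        rw [hfh z hz] at hx
        rw [hx]
      · rw [hf0 x hxW] at hx; exact absurd hx.symm hy0
    · rintro rfl; exact hfh y hy
  have hfiber_not : ∀ y, y ∉ V → y ≠ 0 → f ⁻¹' {y} = ∅ := by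
    intro y hy hy0
    ext x
    simp only [Set.mem_preimage, Set.mem_singleton_iff, Set.mem_empty_iff_false, iff_false]
    intro hx
    by_cases hxW : x ∈ W
    · exact hy (hx ▸ hfW x hxW)
    · rw [hf0 x hxW] at hx; exact hy0 hx.symm
  set N : ℝ → ℕ∞ := fun y => banachIndicatrix f Set.univ y with hN
  have hNval : ∀ y, y ≠ 0 → (N y = 1 ↔ y ∈ V) := by
    intro y hy0
    rw [hN]
    simp only [banachIndicatrix, Set.univ_inter]
    constructor
    · intro h1
      by_contra hyV
      rw [hfiber_not y hyV hy0] at h1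
      simp at h1
    · intro hyV
      rw [hfiber_mem y hyV hy0, Set.encard_singleton]
  -- N is not null measurable
  have hNnm : ¬ NullMeasurable N volume := by
    intro hNm
    have h1 : NullMeasurableSet (N ⁻¹' {1}) volume :=
      hNm (measurableSet_singleton 1)
    apply hV
    have hae : N ⁻¹' {1} =ᵐ[volume] V := by
      rw [Filter.eventuallyEq_set]
      filter_upwards [compl_mem_ae_iff.mpr (measure_singleton (0:ℝ))] with y hy
      simp only [Set.mem_compl_iff, Set.mem_singleton_iff] at hy
      simpa using hNval y hy
    exact h1.congr hae
  refine ⟨f, hmeas, hNnm, ?_⟩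
  intro g hg hae
  exact hNnm (hg.nullMeasurable.congr hae.symm)
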